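/- Let v be a vertex of a countable graph with infinite degree. Then for every d ∈ ℓ²(V) with (d_{end(e)})_{e∈E} ∈ ℓ²(E) and (d_{start(e)})_{e∈E} ∈ ℓ²(E), one has d_v = 0. -/

import Mathlib

lemma aux_const_zero {E : Type*} (f : E → ℂ) (hf : Memℓp f 2) {c : ℂ}
    (h : {e : E | f e = c}.Infinite) : c = 0 := by
  have hs : Summable fun e => ‖f e‖ ^ (2 : ENNReal).toReal :=
    (memℓp_gen_iff (by norm_num)).1 hf
  by_contra hc
  have hpos : 0 < ‖c‖ ^ (2 : ENNReal).toReal := by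
    apply Real.rpow_pos_of_pos; simpa using hc
  have := hs.tendsto_cofinite_zero
  have hmem : ∀ᶠ e in Filter.cofinite, ‖f e‖ ^ (2 : ENNReal).toReal < ‖c‖ ^ (2 : ENNReal).toReal := by
    have := this.eventually (gt_mem_nhds hpos)
    simpa using this
  have hfreq : ∃ᶠ e in Filter.cofinite, f e = c :=
    Filter.frequently_cofinite_iff_infinite.2 h
  obtain ⟨e, he', he⟩ := (hmem.and_frequently hfreq).exists
  rw [he] at he'
  exact lt_irrefl _ he'
  
/-- If `v` is a vertex of infinite degree in a countable graph, then every
`d ∈ ℓ²(V)` with `(d_{end(e)})_{e∈E} ∈ ℓ²(E)` and `(d_{start(e)})_{e∈E} ∈ ℓ²(E)` satisfies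
`d_v = 0`. -/
theorem boundary_value_vanishes_at_infinite_degree {V E : Type*} [Countable V] [Countable E]
    (startE endE : E → V) (v : V)
    (hv : {e : E | startE e = v ∨ endE e = v}.Infinite)
    (d : V → ℂ) (hd : Memℓp d 2)
    (hend : Memℓp (fun e : E => d (endE e)) 2)
    (hstart : Memℓp (fun e : E => d (startE e)) 2) :
    d v = 0 := by
  have : {e : E | startE e = v}.Infinite ∨ {e : E | endE e = v}.Infinite := by
    by_contra h
    push_neg at h
    exact hv (h.1.union h.2)
  rcases this with h | h
  · exact aux_const_zero _ hstart (h.mono fun e he => by simp [Set.mem_setOf_eq.mp he])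
  · exact aux_const_zero _ hend (h.mono fun e he => by simp [Set.mem_setOf_eq.mp he])
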